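/- Let F be the multilinear extension of a monotone submodular f, and x ∈ [0,1]^E with (1-ε)x ∈ [0,1]^E for ε ∈ [0,1]. Then F((1-ε)·x) ≥ (1-ε)·F(x). -/

import Mathlib

open Finset

lemma weight_sum {E : Type*} [DecidableEq E] (p : ℝ) (S : Finset E) :
    ∑ T ∈ S.powerset, p ^ T.card * (1 - p) ^ (S.card - T.card) = 1 := by
  have h := Finset.prod_add (fun _ : E => p) (fun _ => 1 - p) S
  simp only [add_sub_cancel, Finset.prod_const, one_pow] at h
  rw [← Finset.sum_congr rfl (fun T hT => ?_), ← h]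
  rw [Finset.card_sdiff_of_subset (Finset.mem_powerset.mp hT)]

lemma bern {E : Type*} [DecidableEq E]
    (f : Finset E → ℝ)
    (hsub : ∀ S T : Finset E, f S + f T ≥ f (S ∩ T) + f (S ∪ T))
    (hempty : f ∅ = 0)
    (p : ℝ) (hp0 : 0 ≤ p) (hp1 : p ≤ 1) (S : Finset E) :
    p * f S ≤ ∑ T ∈ S.powerset, p ^ T.card * (1 - p) ^ (S.card - T.card) * f T := by
  induction S using Finset.induction_on with
  | empty => simp [hempty]
  | @insert a S ha ih =>
    rw [Finset.sum_powerset_insert ha]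
    have hcard : (insert a S).card = S.card + 1 := Finset.card_insert_of_notMem ha
    have h1 : ∀ T ∈ S.powerset,
        p ^ T.card * (1 - p) ^ ((insert a S).card - T.card) * f T
          = (1 - p) * (p ^ T.card * (1 - p) ^ (S.card - T.card) * f T) := by
      intro T hT
      have hle := Finset.card_le_card (Finset.mem_powerset.mp hT)
      have h2 : (insert a S).card - T.card = (S.card - T.card) + 1 := by omega
      rw [h2, pow_succ]; ring
    have h2 : ∀ T ∈ S.powerset,
        p ^ (insert a T).card * (1 - p) ^ ((insert a S).card - (insert a T).card)
          * f (insert a T)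
          = p * (p ^ T.card * (1 - p) ^ (S.card - T.card) * f (insert a T)) := by
      intro T hT
      have haT : a ∉ T := fun h => ha (Finset.mem_powerset.mp hT h)
      rw [Finset.card_insert_of_notMem haT, hcard]
      have : S.card + 1 - (T.card + 1) = S.card - T.card := by omega
      rw [this, pow_succ]; ring
    rw [Finset.sum_congr rfl h1, Finset.sum_congr rfl h2, ← Finset.mul_sum, ← Finset.mul_sum]
    have hkey : ∀ T ∈ S.powerset,
        p ^ T.card * (1 - p) ^ (S.card - T.card) * (f T + (f (insert a S) - f S))
          ≤ p ^ T.card * (1 - p) ^ (S.card - T.card) * f (insert a T) := by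
      intro T hT
      have hTS := Finset.mem_powerset.mp hT
      have hw : 0 ≤ p ^ T.card * (1 - p) ^ (S.card - T.card) :=
        mul_nonneg (pow_nonneg hp0 _) (pow_nonneg (by linarith) _)
      have hs := hsub (insert a T) S
      rw [Finset.insert_inter_of_notMem ha, Finset.inter_eq_left.mpr hTS,
        Finset.insert_union, Finset.union_eq_right.mpr hTS] at hs
      exact mul_le_mul_of_nonneg_left (by linarith) hw
    have hsum2 := Finset.sum_le_sum hkey
    have hexp : ∑ T ∈ S.powerset,
        p ^ T.card * (1 - p) ^ (S.card - T.card) * (f T + (f (insert a S) - f S))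
        = (∑ T ∈ S.powerset, p ^ T.card * (1 - p) ^ (S.card - T.card) * f T)
          + (f (insert a S) - f S) := by
      simp only [mul_add]
      rw [Finset.sum_add_distrib, ← Finset.sum_mul, weight_sum, one_mul]
    rw [hexp] at hsum2
    have h4 := mul_le_mul_of_nonneg_left hsum2 hp0
    nlinarith [ih]
lemma expand {E : Type*} [Fintype E] [DecidableEq E] (x : E → ℝ) (ε : ℝ) (f : Finset E → ℝ) :
    ∑ T : Finset E, f T * (∏ e ∈ T, (1 - ε) * x e) * ∏ e ∈ Tᶜ, (1 - (1 - ε) * x e)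
      = ∑ S : Finset E, (∑ T ∈ S.powerset, (1 - ε) ^ T.card * ε ^ (S.card - T.card) * f T)
          * ((∏ e ∈ S, x e) * ∏ e ∈ Sᶜ, (1 - x e)) := by
  have step1 : ∀ T : Finset E,
      f T * (∏ e ∈ T, (1 - ε) * x e) * ∏ e ∈ Tᶜ, (1 - (1 - ε) * x e)
        = ∑ U ∈ Tᶜ.powerset,
            (1 - ε) ^ T.card * ε ^ U.card * f T
              * ((∏ e ∈ T ∪ U, x e) * ∏ e ∈ (T ∪ U)ᶜ, (1 - x e)) := by
    intro T
    have hprod : ∏ e ∈ Tᶜ, (1 - (1 - ε) * x e)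
        = ∑ U ∈ Tᶜ.powerset, (∏ e ∈ U, ε * x e) * ∏ e ∈ Tᶜ \ U, (1 - x e) := by
      rw [← Finset.prod_add]
      exact Finset.prod_congr rfl (fun e _ => by ring)
    rw [hprod, Finset.mul_sum]
    refine Finset.sum_congr rfl (fun U hU => ?_)
    have hUT : U ⊆ Tᶜ := Finset.mem_powerset.mp hU
    have hdisj : Disjoint T U := Finset.disjoint_left.mpr
      (fun e heT heU => (Finset.mem_compl.mp (hUT heU)) heT)
    rw [Finset.prod_union hdisj, Finset.prod_mul_distrib, Finset.prod_const,
      Finset.prod_mul_distrib, Finset.prod_const,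
      show Tᶜ \ U = (T ∪ U)ᶜ by rw [Finset.compl_union, sdiff_eq]; rfl]
    ring
  simp only [step1]
  simp only [Finset.sum_mul]
  rw [Finset.sum_sigma', Finset.sum_sigma']
  refine Finset.sum_nbij' (fun a => ⟨a.1 ∪ a.2, a.1⟩) (fun b => ⟨b.2, b.1 \ b.2⟩)
    ?_ ?_ ?_ ?_ ?_
  · rintro ⟨T, U⟩ h
    simp only [Finset.mem_sigma, Finset.mem_univ, Finset.mem_powerset] at *
    exact ⟨trivial, Finset.subset_union_left⟩
  · rintro ⟨S, T⟩ h
    simp only [Finset.mem_sigma, Finset.mem_univ, Finset.mem_powerset] at *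
    refine ⟨trivial, fun e he => ?_⟩
    simp only [Finset.mem_sdiff] at he
    exact Finset.mem_compl.mpr he.2
  · rintro ⟨T, U⟩ h
    simp only [Finset.mem_sigma, Finset.mem_univ, Finset.mem_powerset] at h
    have hdisj : Disjoint T U := Finset.disjoint_left.mpr
      (fun e heT heU => (Finset.mem_compl.mp (h.2 heU)) heT)
    simp [Finset.union_sdiff_cancel_left hdisj]
  · rintro ⟨S, T⟩ h
    simp only [Finset.mem_sigma, Finset.mem_univ, Finset.mem_powerset] at h
    simp [Finset.union_sdiff_of_subset h.2]
  · rintro ⟨T, U⟩ h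
    simp only [Finset.mem_sigma, Finset.mem_univ, Finset.mem_powerset] at h
    have hdisj : Disjoint T U := Finset.disjoint_left.mpr
      (fun e heT heU => (Finset.mem_compl.mp (h.2 heU)) heT)
    have : (T ∪ U).card - T.card = U.card := by
      rw [Finset.card_union_of_disjoint hdisj]; omega
    simp only [this]


theorem multilinear_scaling_lower_bound
    {E : Type*} [Fintype E] [DecidableEq E]
    (f : Finset E → ℝ) (hnn : ∀ S, 0 ≤ f S)
    (hmono : ∀ S T : Finset E, S ⊆ T → f S ≤ f T)
    (hsub : ∀ S T : Finset E, f S + f T ≥ f (S ∩ T) + f (S ∪ T))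
    (hempty : f ∅ = 0)
    (F : (E → ℝ) → ℝ)
    (hF : ∀ z : E → ℝ, F z = ∑ S : Finset E,
      f S * (∏ e ∈ S, z e) * ∏ e ∈ Sᶜ, (1 - z e))
    (x : E → ℝ) (hx : ∀ e, x e ∈ Set.Icc (0:ℝ) 1)
    (ε : ℝ) (hε : ε ∈ Set.Icc (0:ℝ) 1) :
    F (fun e => (1 - ε) * x e) ≥ (1 - ε) * F x := by
  obtain ⟨hε0, hε1⟩ := hε
  rw [hF, hF, ge_iff_le, Finset.mul_sum]
  have hexp := expand x ε f
  rw [hexp]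
  refine Finset.sum_le_sum (fun S _ => ?_)
  have hw : 0 ≤ (∏ e ∈ S, x e) * ∏ e ∈ Sᶜ, (1 - x e) := by
    refine mul_nonneg (Finset.prod_nonneg fun e _ => (hx e).1)
      (Finset.prod_nonneg fun e _ => by linarith [(hx e).2])
  have hb := bern f hsub hempty (1 - ε) (by linarith) (by linarith) S
  simp only [sub_sub_cancel] at hb
  calc (1 - ε) * (f S * (∏ e ∈ S, x e) * ∏ e ∈ Sᶜ, (1 - x e))
      = ((1 - ε) * f S) * ((∏ e ∈ S, x e) * ∏ e ∈ Sᶜ, (1 - x e)) := by ring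
    _ ≤ (∑ T ∈ S.powerset, (1 - ε) ^ T.card * ε ^ (S.card - T.card) * f T)
          * ((∏ e ∈ S, x e) * ∏ e ∈ Sᶜ, (1 - x e)) :=
        mul_le_mul_of_nonneg_right hb hw
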